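/- The W-state W_N = e_{0⋯01} does not belong to uMPS(2, 2, N) for any N > 3. -/

import Mathlib

open Matrix BigOperators

/-- The coefficient tensor of the uniform matrix product state
`T_N(M_0,…,M_{d-1}) = Σ tr(M_{i_1} ⋯ M_{i_N}) e_{i_1} ⊗ ⋯ ⊗ e_{i_N}`,
identified with its coefficient function `(Fin N → Fin d) → ℂ`. -/
noncomputable def uT (D d N : ℕ) (M : Fin d → Matrix (Fin D) (Fin D) ℂ) :
    (Fin N → Fin d) → ℂ :=
  fun v => Matrix.trace (List.ofFn fun k => M (v k)).prod

/-- The set of uniform matrix product states in `(ℂ^d)^{⊗N}`. -/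
noncomputable def uMPS (D d N : ℕ) : Set ((Fin N → Fin d) → ℂ) :=
  Set.range (uT D d N)

/-- The `W`-state `W_N = e_{0⋯01}`. -/
noncomputable def Wstate (N : ℕ) : (Fin N → Fin 2) → ℂ :=
  fun v => if (Finset.univ.filter fun k => v k = 1).card = 1 then 1 else 0

abbrev Mat2 := Matrix (Fin 2) (Fin 2) ℂ

lemma conj_list_prod {α : Type*} [Monoid α] (u : αˣ) (L : List α) :
    (L.map fun x => (↑u⁻¹ : α) * x * ↑u).prod = ↑u⁻¹ * L.prod * ↑u := by
  induction L with
  | nil => simp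
  | cons a t ih =>
      rw [List.map_cons, List.prod_cons, List.prod_cons, ih]
      simp only [mul_assoc]
      rw [← mul_assoc (↑u : α) (↑u⁻¹ : α), Units.mul_inv, one_mul]

lemma uT_conj (D d N : ℕ) (M : Fin d → Matrix (Fin D) (Fin D) ℂ)
    (u : (Matrix (Fin D) (Fin D) ℂ)ˣ) :
    uT D d N (fun i => (↑u⁻¹ : Matrix (Fin D) (Fin D) ℂ) * M i * (↑u : Matrix (Fin D) (Fin D) ℂ))
      = uT D d N M := by
  funext v
  show Matrix.trace (List.ofFn fun k =>
      (↑u⁻¹ : Matrix (Fin D) (Fin D) ℂ) * M (v k) * (↑u : Matrix (Fin D) (Fin D) ℂ)).prod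
      = Matrix.trace (List.ofFn fun k => M (v k)).prod
  have h : (List.ofFn fun k =>
        (↑u⁻¹ : Matrix (Fin D) (Fin D) ℂ) * M (v k) * (↑u : Matrix (Fin D) (Fin D) ℂ))
      = (List.ofFn fun k => M (v k)).map
        (fun x => (↑u⁻¹ : Matrix (Fin D) (Fin D) ℂ) * x * (↑u : Matrix (Fin D) (Fin D) ℂ)) := by
    rw [List.map_ofFn]; rfl
  rw [h, conj_list_prod, Matrix.trace_units_conj']

lemma ofFn_comp_val {α : Type*} (n : ℕ) (g : ℕ → α) :
    (List.ofFn fun k : Fin n => g k.val) = (List.range n).map g := by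
  rw [List.ofFn_eq_map]
  rw [show ((fun k : Fin n => g k.val) = g ∘ Fin.val) from rfl, ← List.map_map]
  congr 1
  exact List.map_coe_finRange_eq_range

lemma range_map_prod_split {α : Type*} [Monoid α] (g : ℕ → α) (p q : ℕ) :
    ((List.range (p+q)).map g).prod
      = ((List.range p).map g).prod * ((List.range q).map fun i => g (p+i)).prod := by
  rw [List.range_add, List.map_append, List.prod_append, List.map_map]
  rfl

lemma range_map_prod_const {α : Type*} [Monoid α] (g : ℕ → α) (c : α) (q : ℕ)
    (h : ∀ i < q, g i = c) : ((List.range q).map g).prod = c ^ q := by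
  have : (List.range q).map g = List.replicate q c := by
    apply List.eq_replicate_iff.mpr
    constructor
    · simp
    · intro b hb
      obtain ⟨i, hi, rfl⟩ := List.mem_map.mp hb
      exact h i (List.mem_range.mp hi)
  rw [this, List.prod_replicate]

lemma range_map_prod_one {α : Type*} [Monoid α] (g : ℕ → α) :
    ((List.range 1).map g).prod = g 0 := by rw [show List.range 1 = [0] from rfl]; simp

lemma prod_word1 {α : Type*} [Monoid α] (A B : α) (p : ℕ) :
    ((List.range (1+p)).map (fun k => if k = 0 then B else A)).prod = B * A ^ p := by
  rw [range_map_prod_split, range_map_prod_one, if_pos rfl]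
  congr 1
  exact range_map_prod_const _ _ _ (fun i hi => if_neg (by omega))

lemma prod_word2 {α : Type*} [Monoid α] (A B : α) (p q : ℕ) :
    ((List.range (1+(p+(1+q)))).map (fun k => if k = 0 ∨ k = 1+p then B else A)).prod
      = B * A ^ p * (B * A ^ q) := by
  rw [range_map_prod_split, range_map_prod_one, if_pos (Or.inl rfl),
    range_map_prod_split, range_map_prod_split, range_map_prod_one]
  rw [range_map_prod_const _ A p (fun i hi => if_neg (by omega)),
    range_map_prod_const _ A q (fun i hi => if_neg (by omega)),
    if_pos (Or.inr (by omega)), mul_assoc]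

lemma prod_word3 {α : Type*} [Monoid α] (A B : α) (p q : ℕ) :
    ((List.range (1+(1+(p+(1+q))))).map
        (fun k => if k = 0 ∨ k = 1 ∨ k = 2+p then B else A)).prod
      = B * (B * A ^ p * (B * A ^ q)) := by
  rw [range_map_prod_split, range_map_prod_one, if_pos (Or.inl rfl),
    range_map_prod_split, range_map_prod_one, if_pos (Or.inr (Or.inl rfl)),
    range_map_prod_split, range_map_prod_split, range_map_prod_one]
  rw [range_map_prod_const _ A p (fun i hi => if_neg (by omega)),
    range_map_prod_const _ A q (fun i hi => if_neg (by omega)),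
    if_pos (Or.inr (Or.inr (by omega))), mul_assoc]

lemma wstate_zero (n : ℕ) : Wstate n (fun _ => 0) = 0 := by
  unfold Wstate
  rw [if_neg]
  simp

lemma wstate_one (n i : ℕ) (hi : i < n) :
    Wstate n (fun k => if k.val = i then 1 else 0) = 1 := by
  unfold Wstate
  rw [if_pos]
  have : (Finset.univ.filter fun k : Fin n => (if k.val = i then (1:Fin 2) else 0) = 1)
      = {⟨i,hi⟩} := by
    ext k; simp [Fin.ext_iff]
  rw [this, Finset.card_singleton]

lemma wstate_two (n i j : ℕ) (hi : i < n) (hj : j < n) (hij : i ≠ j) :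
    Wstate n (fun k => if k.val = i ∨ k.val = j then 1 else 0) = 0 := by
  unfold Wstate
  rw [if_neg]
  have : (Finset.univ.filter fun k : Fin n => (if k.val = i ∨ k.val = j then (1:Fin 2) else 0) = 1)
      = {⟨i,hi⟩, ⟨j,hj⟩} := by
    ext k; simp [Fin.ext_iff]; tauto
  rw [this, Finset.card_insert_of_notMem (by simp [Fin.ext_iff, hij]), Finset.card_singleton]
  omega

lemma wstate_three (n i j h : ℕ) (hi : i < n) (hj : j < n) (hh : h < n)
    (h1 : i ≠ j) (h2 : i ≠ h) (h3 : j ≠ h) :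
    Wstate n (fun k => if k.val = i ∨ k.val = j ∨ k.val = h then 1 else 0) = 0 := by
  unfold Wstate
  rw [if_neg]
  have : (Finset.univ.filter
        fun k : Fin n => (if k.val = i ∨ k.val = j ∨ k.val = h then (1:Fin 2) else 0) = 1)
      = {⟨i,hi⟩, ⟨j,hj⟩, ⟨h,hh⟩} := by
    ext k; simp [Fin.ext_iff]; tauto
  rw [this, Finset.card_insert_of_notMem (by simp [Fin.ext_iff, h1, h2]),
    Finset.card_insert_of_notMem (by simp [Fin.ext_iff, h3]), Finset.card_singleton]
  omega

lemma conj_of_mul_eq (u : Mat2ˣ) (A T : Mat2) (h : A * ↑u = ↑u * T) :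
    (↑u⁻¹ : Mat2) * A * ↑u = T := by
  rw [mul_assoc, h, ← mul_assoc]
  rw [show ((↑u⁻¹ : Mat2) * ↑u = 1) from u.inv_mul, one_mul]

lemma mkUnit (P : Mat2) (h : P.det ≠ 0) : ∃ u : Mat2ˣ, (↑u : Mat2) = P := by
  have : IsUnit P := (Matrix.isUnit_iff_isUnit_det P).mpr (isUnit_iff_ne_zero.mpr h)
  exact ⟨this.unit, this.unit_spec⟩

lemma tri (A : Mat2) : ∃ (u : Mat2ˣ) (l b m : ℂ), (↑u⁻¹ : Mat2) * A * ↑u = !![l, b; 0, m] := by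
  obtain ⟨a, b, c, d, rfl⟩ : ∃ a b c d, A = !![a, b; c, d] :=
    ⟨_, _, _, _, Matrix.eta_fin_two A⟩
  obtain ⟨z, hz⟩ := IsAlgClosed.exists_pow_nat_eq
    ((a + d)^2 - 4*(a*d - b*c)) (n := 2) (by norm_num)
  by_cases hc : c = 0
  · exact ⟨1, a, b, d, by
      simp only [inv_one, Units.val_one, one_mul, mul_one, hc]⟩
  · obtain ⟨u, hu⟩ := mkUnit !![(a + d + z)/2 - d, 1; c, 0]
      (by rw [Matrix.det_fin_two_of]; simpa using hc)
    refine ⟨u, (a + d + z)/2, 1, a + d - (a + d + z)/2, conj_of_mul_eq u _ _ ?_⟩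
    rw [hu, Matrix.mul_fin_two, Matrix.mul_fin_two]
    ext i j
    fin_cases i <;> fin_cases j <;> simp <;> field_simp
    all_goals first
      | linear_combination -2*hz
      | linear_combination 2*hz
      | linear_combination c*hz/4
      | linear_combination -c*hz/4
      | linear_combination -hz
      | ring

lemma tri_to_jordan (l b m : ℂ) :
    ∃ u : Mat2ˣ, (∃ l' m' : ℂ, (↑u⁻¹ : Mat2) * !![l, b; 0, m] * (↑u : Mat2) = !![l', 0; 0, m']) ∨
      (∃ l' : ℂ, (↑u⁻¹ : Mat2) * !![l, b; 0, m] * (↑u : Mat2) = !![l', 1; 0, l']) := by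
  by_cases hlm : l = m
  · by_cases hb : b = 0
    · exact ⟨1, Or.inl ⟨l, m, by simp [hb]⟩⟩
    · obtain ⟨u, hu⟩ := mkUnit !![b, 0; 0, 1]
        (by rw [Matrix.det_fin_two_of]; simpa using hb)
      refine ⟨u, Or.inr ⟨l, conj_of_mul_eq u _ _ ?_⟩⟩
      rw [hu, Matrix.mul_fin_two, Matrix.mul_fin_two, hlm]
      ext i j
      fin_cases i <;> fin_cases j <;> simp <;> ring
  · obtain ⟨u, hu⟩ := mkUnit !![1, b/(m-l); 0, 1]
      (by rw [Matrix.det_fin_two_of]; norm_num)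
    refine ⟨u, Or.inl ⟨l, m, conj_of_mul_eq u _ _ ?_⟩⟩
    rw [hu, Matrix.mul_fin_two, Matrix.mul_fin_two]
    have hml : m - l ≠ 0 := sub_ne_zero.mpr (Ne.symm hlm)
    ext i j
    fin_cases i <;> fin_cases j <;> simp <;> field_simp <;> ring

lemma jordan2 (A : Mat2) :
    ∃ u : Mat2ˣ, (∃ l m : ℂ, (↑u⁻¹ : Mat2) * A * (↑u : Mat2) = !![l, 0; 0, m]) ∨
      (∃ l : ℂ, (↑u⁻¹ : Mat2) * A * (↑u : Mat2) = !![l, 1; 0, l]) := by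
  obtain ⟨u1, l, b, m, h1⟩ := tri A
  obtain ⟨u2, h2⟩ := tri_to_jordan l b m
  refine ⟨u1 * u2, ?_⟩
  have key : (↑(u1*u2)⁻¹ : Mat2) * A * (↑(u1*u2) : Mat2)
      = (↑u2⁻¹ : Mat2) * ((↑u1⁻¹ : Mat2) * A * (↑u1 : Mat2)) * (↑u2 : Mat2) := by
    rw [_root_.mul_inv_rev, Units.val_mul, Units.val_mul]
    noncomm_ring
  rw [key, h1]
  exact h2


lemma dpow (l m : ℂ) (k : ℕ) : (!![l, 0; 0, m] : Mat2) ^ k = !![l^k, 0; 0, m^k] := by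
  induction k with
  | zero => simp [Matrix.one_fin_two]
  | succ k ih =>
      rw [pow_succ, ih, Matrix.mul_fin_two]
      ext i j
      fin_cases i <;> fin_cases j <;> simp [pow_succ]

lemma jpow (l : ℂ) (k : ℕ) :
    (!![l, 1; 0, l] : Mat2) ^ (k+1) = !![l^(k+1), (k+1)*l^k; 0, l^(k+1)] := by
  induction k with
  | zero => simp
  | succ k ih =>
      rw [pow_succ, ih, Matrix.mul_fin_two]
      ext i j
      fin_cases i <;> fin_cases j <;> simp [pow_succ] <;> ring

/-- For `N > 3`, the `W`-state is not a uniform matrix product state in `uMPS(2,2,N)`. -/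
theorem stmt_14 (N : ℕ) (hN : 3 < N) : Wstate N ∉ uMPS 2 2 N := by
  rintro ⟨M, hM⟩
  obtain ⟨n, rfl⟩ : ∃ n, N = n + 4 := ⟨N - 4, by omega⟩
  obtain ⟨u, hu⟩ := jordan2 (M 0)
  have hM' : uT 2 2 (n+4) (fun i => (↑u⁻¹ : Mat2) * M i * (↑u : Mat2)) = Wstate (n+4) := by
    rw [uT_conj]; exact hM
  set A : Mat2 := (↑u⁻¹ : Mat2) * M 0 * (↑u : Mat2) with hA
  set B : Mat2 := (↑u⁻¹ : Mat2) * M 1 * (↑u : Mat2) with hB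
  have word : ∀ v : Fin (n+4) → Fin 2,
      Matrix.trace (List.ofFn fun k => (↑u⁻¹ : Mat2) * M (v k) * (↑u : Mat2)).prod
        = Wstate (n+4) v := fun v => congrFun hM' v
  have eval : ∀ (P : ℕ → Prop) (_ : DecidablePred P),
      Matrix.trace ((List.range (n+4)).map (fun k => if P k then B else A)).prod
        = Wstate (n+4) (fun k => if P k.val then 1 else 0) := by
    intro P hP
    rw [← word (fun k => if P k.val then 1 else 0)]
    congr 1
    rw [← ofFn_comp_val]
    refine congrArg _ (congrArg _ (funext fun k => ?_))
    by_cases h : P k.val <;> simp [h, hA, hB, Matrix.coe_units_inv]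
  have e0 : Matrix.trace (A ^ (n+4)) = 0 := by
    have h := eval (fun _ => False) inferInstance
    rw [range_map_prod_const _ A _ (fun i _ => if_neg not_false)] at h
    rw [h]
    simpa using wstate_zero (n+4)
  have e1 : Matrix.trace (B * A ^ (n+3)) = 1 := by
    have h := eval (fun k => k = 0) inferInstance
    rw [show n+4 = 1+(n+3) by omega, prod_word1] at h
    rw [h]
    exact wstate_one _ 0 (by omega)
  have f0 : Matrix.trace (B * A ^ (n+2) * (B * A ^ 0)) = 0 := by
    have h := eval (fun k => k = 0 ∨ k = 1+(n+2)) inferInstance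
    rw [show n+4 = 1+((n+2)+(1+0)) by omega, prod_word2] at h
    rw [h]
    exact wstate_two _ 0 (1+(n+2)) (by omega) (by omega) (by omega)
  have f1 : Matrix.trace (B * A ^ (n+1) * (B * A ^ 1)) = 0 := by
    have h := eval (fun k => k = 0 ∨ k = 1+(n+1)) inferInstance
    rw [show n+4 = 1+((n+1)+(1+1)) by omega, prod_word2] at h
    rw [h]
    exact wstate_two _ 0 (1+(n+1)) (by omega) (by omega) (by omega)
  have f2 : Matrix.trace (B * A ^ n * (B * A ^ 2)) = 0 := by
    have h := eval (fun k => k = 0 ∨ k = 1+n) inferInstance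
    rw [show n+4 = 1+(n+(1+2)) by omega, prod_word2] at h
    rw [h]
    exact wstate_two _ 0 (1+n) (by omega) (by omega) (by omega)
  have h0 : Matrix.trace (B * (B * A ^ (n+1) * (B * A ^ 0))) = 0 := by
    have h := eval (fun k => k = 0 ∨ k = 1 ∨ k = 2+(n+1)) inferInstance
    rw [show n+4 = 1+(1+((n+1)+(1+0))) by omega, prod_word3] at h
    rw [h]
    exact wstate_three _ 0 1 (2+(n+1)) (by omega) (by omega) (by omega)
      (by omega) (by omega) (by omega)
  have h1 : Matrix.trace (B * (B * A ^ n * (B * A ^ 1))) = 0 := by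
    have h := eval (fun k => k = 0 ∨ k = 1 ∨ k = 2+n) inferInstance
    rw [show n+4 = 1+(1+(n+(1+1))) by omega, prod_word3] at h
    rw [h]
    exact wstate_three _ 0 1 (2+n) (by omega) (by omega) (by omega)
      (by omega) (by omega) (by omega)
  clear word eval hM hM'
  rcases hu with ⟨l, m, hD⟩ | ⟨l, hJ⟩
  · -- diagonal case
    obtain ⟨a, b, c, d, hBe⟩ : ∃ a b c d, B = !![a, b; c, d] :=
      ⟨_, _, _, _, Matrix.eta_fin_two B⟩
    rw [hD] at e0 e1 f0 f1 f2 h0 h1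
    rw [hBe] at e1 f0 f1 f2 h0 h1
    simp only [dpow, Matrix.mul_fin_two, Matrix.trace_fin_two_of] at e0 e1 f0 f1 f2 h0 h1
    have E0 : l^(n+4) + m^(n+4) = 0 := by linear_combination e0
    have E1 : a*l^(n+3) + d*m^(n+3) = 1 := by linear_combination e1
    have F0 : a^2*l^(n+2) + d^2*m^(n+2) + b*c*(l^(n+2) + m^(n+2)) = 0 := by
      linear_combination f0
    have F1 : a^2*l^(n+2) + d^2*m^(n+2) + b*c*(m^(n+1)*l + l^(n+1)*m) = 0 := by
      linear_combination f1
    have F2 : a^2*l^(n+2) + d^2*m^(n+2) + b*c*(m^n*l^2 + l^n*m^2) = 0 := by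
      linear_combination f2
    have H0 : a*(a^2+b*c)*l^(n+1) + d*(d^2+b*c)*m^(n+1)
        + b*c*(a+d)*(m^(n+1)+l^(n+1)) = 0 := by linear_combination h0
    have H1 : a*(a^2+b*c)*l^(n+1) + d*(d^2+b*c)*m^(n+1)
        + b*c*(a+d)*(m^n*l + l^n*m) = 0 := by linear_combination h1
    clear e0 e1 f0 f1 f2 h0 h1
    -- l and m are nonzero
    have hl : l ≠ 0 := by
      intro hl0
      have hl4 : l^(n+4) = 0 := by rw [hl0]; exact zero_pow (by omega)
      have hm4 : m^(n+4) = 0 := by linear_combination E0 - hl4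
      have hm0 : m = 0 := pow_eq_zero_iff (by omega) |>.mp hm4
      have hl3 : l^(n+3) = 0 := by rw [hl0]; exact zero_pow (by omega)
      have hm3 : m^(n+3) = 0 := by rw [hm0]; exact zero_pow (by omega)
      have : (1:ℂ) = 0 := by linear_combination -E1 + a*hl3 + d*hm3
      exact one_ne_zero this
    have hm : m ≠ 0 := by
      intro hm0
      have hm4 : m^(n+4) = 0 := by rw [hm0]; exact zero_pow (by omega)
      have hl4 : l^(n+4) = 0 := by linear_combination E0 - hm4
      exact hl (pow_eq_zero_iff (by omega) |>.mp hl4)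
    rcases eq_or_ne (b*c) 0 with hbc | hbc
    · -- triangular case
      have S3 : a^2*l^(n+2) + d^2*m^(n+2) = 0 := by
        linear_combination F0 - (l^(n+2)+m^(n+2))*hbc
      have S4 : a^3*l^(n+1) + d^3*m^(n+1) = 0 := by
        linear_combination H0 - (a*l^(n+1) + d*m^(n+1) + (a+d)*(m^(n+1)+l^(n+1)))*hbc
      have key : l^(n+1)*m^(n+1)*(a*d*(d*l - a*m)^2) = 0 := by
        linear_combination (a*l^(n+3) + d*m^(n+3))*S4 - (a^2*l^(n+2)+d^2*m^(n+2))*S3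
      have key2 : a*d*(d*l - a*m)^2 = 0 := by
        rcases mul_eq_zero.mp key with h | h
        · rcases mul_eq_zero.mp h with h' | h'
          · exact absurd h' (pow_ne_zero _ hl)
          · exact absurd h' (pow_ne_zero _ hm)
        · exact h
      rcases mul_eq_zero.mp key2 with had | hda
      · rcases mul_eq_zero.mp had with ha | hd
        · -- a = 0
          have hd2 : d^2*m^(n+2) = 0 := by linear_combination S3 - a*l^(n+2)*ha
          have hd0 : d = 0 := by
            rcases mul_eq_zero.mp hd2 with h | h
            · exact pow_eq_zero_iff (two_ne_zero) |>.mp h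
            · exact absurd h (pow_ne_zero _ hm)
          have : (1:ℂ) = 0 := by linear_combination -E1 + l^(n+3)*ha + m^(n+3)*hd0
          exact one_ne_zero this
        · -- d = 0
          have ha2 : a^2*l^(n+2) = 0 := by linear_combination S3 - (d+0)*m^(n+2)*hd
          have ha0 : a = 0 := by
            rcases mul_eq_zero.mp ha2 with h | h
            · exact pow_eq_zero_iff (two_ne_zero) |>.mp h
            · exact absurd h (pow_ne_zero _ hl)
          have : (1:ℂ) = 0 := by linear_combination -E1 + l^(n+3)*ha0 + m^(n+3)*hd
          exact one_ne_zero this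
      · -- d*l = a*m
        have hda' : d*l - a*m = 0 := pow_eq_zero_iff (two_ne_zero) |>.mp hda
        have : l = 0 := by linear_combination -l*E1 + m^(n+3)*hda' + a*E0
        exact hl this
    · -- b*c ≠ 0
      have d1 : b*c*((l-m)*(l^(n+1)-m^(n+1))) = 0 := by linear_combination F0 - F1
      have d2 : b*c*((l-m)*(l^n*m - m^n*l)) = 0 := by linear_combination F1 - F2
      rcases eq_or_ne l m with hlm | hlm
      · rw [← hlm] at E0
        have hp : l^(n+4) = 0 := by linear_combination E0/2
        exact hl (pow_eq_zero_iff (by omega) |>.mp hp)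
      · have hlm' : l - m ≠ 0 := sub_ne_zero.mpr hlm
        have hA1 : l^(n+1) = m^(n+1) := by
          have h' := (mul_eq_zero.mp d1).resolve_left hbc
          have h'' := (mul_eq_zero.mp h').resolve_left hlm'
          linear_combination h''
        have hB1 : l^n*m = m^n*l := by
          have h' := (mul_eq_zero.mp d2).resolve_left hbc
          have h'' := (mul_eq_zero.mp h').resolve_left hlm'
          linear_combination h''
        have hm2 : m = -l := by
          have hml : m^n*(l^2 - m^2) = 0 := by linear_combination m*hA1 - l*hB1
          have h' := (mul_eq_zero.mp hml).resolve_left (pow_ne_zero _ hm)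
          have h'' : (l-m)*(l+m) = 0 := by linear_combination h'
          have h3 := (mul_eq_zero.mp h'').resolve_left hlm'
          linear_combination h3
        have hpar : (-1:ℂ)^(n+1) = 1 := by
          rw [hm2, neg_pow] at hA1
          have hln : l^(n+1) ≠ 0 := pow_ne_zero _ hl
          apply mul_right_cancel₀ hln
          linear_combination -hA1
        have had : a + d = 0 := by
          have key2 : b*c*(a+d)*(2*l^n*(l-m)) = 0 := by
            linear_combination H0 - H1 + b*c*(a+d)*hA1 - b*c*(a+d)*hB1
          rcases mul_eq_zero.mp key2 with h | h
          · rcases mul_eq_zero.mp h with h' | h'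
            · exact absurd h' hbc
            · exact h'
          · exfalso
            rcases mul_eq_zero.mp h with h' | h'
            · rcases mul_eq_zero.mp h' with h'' | h''
              · exact two_ne_zero h''
              · exact pow_ne_zero _ hl h''
            · exact hlm' h'
        have hd : d = -a := by linear_combination had
        have : (1:ℂ) = 0 := by
          rw [hm2, neg_pow] at E1
          linear_combination -E1 + ((-1:ℂ))^(n+3)*l^(n+3)*hd - a*l^(n+3)*hpar
        exact one_ne_zero this
  · -- Jordan block case
    rw [hJ] at e0 e1
    rw [show n+4 = (n+3)+1 from rfl, jpow, Matrix.trace_fin_two_of] at e0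
    have hl : l = 0 := by
      have hp : l^((n+3)+1) = 0 := by linear_combination e0/2
      exact pow_eq_zero_iff (by omega) |>.mp hp
    have h2 : (!![l, 1; 0, l] : Mat2)^2 = 0 := by
      rw [hl, pow_two, Matrix.mul_fin_two]
      ext i j
      fin_cases i <;> fin_cases j <;> simp
    rw [show n+3 = 2+(n+1) by omega, pow_add, h2, zero_mul, mul_zero,
      Matrix.trace_zero] at e1
    exact one_ne_zero e1.symm
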